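/- For 0 ≤ θ ≤ 1, the only real solution of z = tanh(θ z) is z = 0. -/
import Mathlib

lemma sinh_lt_mul_cosh {x : ℝ} (hx : 0 < x) : Real.sinh x < x * Real.cosh x := by
  have h : StrictMonoOn (fun t : ℝ => t * Real.cosh t - Real.sinh t) (Set.Ici 0) := by
    apply strictMonoOn_of_deriv_pos (convex_Ici 0)
    · exact ((continuous_id.mul Real.continuous_cosh).sub Real.continuous_sinh).continuousOn
    · intro t ht
      rw [interior_Ici] at ht
      have : HasDerivAt (fun t : ℝ => t * Real.cosh t - Real.sinh t)
          (1 * Real.cosh t + t * Real.sinh t - Real.cosh t) t := by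
        exact ((hasDerivAt_id t).mul (Real.hasDerivAt_cosh t)).sub (Real.hasDerivAt_sinh t)
      rw [this.deriv]
      have hs : 0 < Real.sinh t := Real.sinh_pos_iff.2 ht
      nlinarith [Set.mem_Ioi.1 ht]
  have := h (Set.self_mem_Ici) (Set.mem_Ici.2 hx.le) hx
  simpa using this

lemma tanh_lt_self {x : ℝ} (hx : 0 < x) : Real.tanh x < x := by
  rw [Real.tanh_eq_sinh_div_cosh, div_lt_iff₀ (Real.cosh_pos x)]
  exact sinh_lt_mul_cosh hx

lemma abs_tanh_lt {x : ℝ} (hx : x ≠ 0) : |Real.tanh x| < |x| := by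
  rcases hx.lt_or_gt with h | h
  · have := tanh_lt_self (neg_pos.2 h)
    rw [Real.tanh_neg] at this
    have ht : 0 < -Real.tanh x := by
      have : 0 < Real.sinh (-x) / Real.cosh (-x) :=
        div_pos (Real.sinh_pos_iff.2 (neg_pos.2 h)) (Real.cosh_pos _)
      rw [← Real.tanh_eq_sinh_div_cosh, Real.tanh_neg] at this
      linarith
    rw [abs_of_neg h, abs_of_neg (by linarith : Real.tanh x < 0)]
    linarith
  · have := tanh_lt_self h
    have ht : 0 < Real.tanh x := by
      have : 0 < Real.sinh x / Real.cosh x :=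
        div_pos (Real.sinh_pos_iff.2 h) (Real.cosh_pos _)
      rwa [← Real.tanh_eq_sinh_div_cosh] at this
    rw [abs_of_pos h, abs_of_pos ht]
    linarith

theorem curie_weiss_high_temp_fixed_point (θ : ℝ) (hθ0 : 0 ≤ θ) (hθ1 : θ ≤ 1) :
    ∀ z : ℝ, z = Real.tanh (θ * z) → z = 0 := by
  intro z hz
  by_contra hz0
  rcases eq_or_ne (θ * z) 0 with h | h
  · rw [h, Real.tanh_zero] at hz; exact hz0 hz
  · have h1 : |z| < |θ * z| := by nth_rewrite 1 [hz]; exact abs_tanh_lt h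
    have h2 : |θ * z| ≤ |z| := by
      rw [abs_mul, abs_of_nonneg hθ0]
      nlinarith [abs_nonneg z]
    linarith
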